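/- Let O be a non-empty 1-orientation on a connected graph G and let e be its bioriented edge. The following are equivalent: (a) O is e-rooted; (b) for every vertex v of G there exists an O-directed path from e to v; (c) for every edge e' of G there exists a 1-orientation O' on G whose bioriented edge is e' and such that O ∼ O'. -/

import Mathlib

/-!
Common framework: finite vertex-weighted multigraphs (loops and multiple edges
allowed), generalized orientations, divisors, contractions, and poset gadgets.

A graph is encoded by a finite set `V ⊆ ℕ` of vertices, a finite set `E ⊆ ℕ`
of edges, an "ends" function assigning to each edge its ordered pair of
end-vertices (the two components encode the two half-edges), and a weight
function `w : ℕ → ℕ`.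

A generalized orientation is a function `ℕ → Option EdgeDir`, where `none`
means the edge is absent (an orientation on a spanning subgraph `G − S` takes
the value `none` exactly on edges outside `E \ S`), `fwd`/`bwd` give the edge a
single direction, and `bi` makes the edge bioriented.
-/

open scoped Classical
open Finset

/-- Direction of an edge under a generalized orientation. -/
inductive EdgeDir : Type
  | fwd
  | bwd
  | bi
deriving DecidableEq

/-- Generalized orientation data. -/
abbrev Orient : Type := ℕ → Option EdgeDir

/-- The number of ending (target) half-edges at the vertex `v` of an edge with
end-pair `p`, given its direction `d`.  A one-way oriented edge has exactly
one target end; a bioriented edge has both ends as targets. -/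
def dirT : Option EdgeDir → ℕ × ℕ → ℕ → ℕ
  | none, _, _ => 0
  | some EdgeDir.fwd, p, v => if p.2 = v then 1 else 0
  | some EdgeDir.bwd, p, v => if p.1 = v then 1 else 0
  | some EdgeDir.bi, p, v => (if p.1 = v then 1 else 0) + (if p.2 = v then 1 else 0)

/-- Restriction of orientation data to the set `D` of kept edges. -/
def restr (O : Orient) (D : Finset ℕ) : Orient := fun e => if e ∈ D then O e else none

/-- A finite vertex-weighted multigraph. -/
structure WGraph : Type where
  V : Finset ℕ
  E : Finset ℕ
  ends : ℕ → ℕ × ℕ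
  w : ℕ → ℕ
  ends_mem : ∀ e ∈ E, (ends e).1 ∈ V ∧ (ends e).2 ∈ V

namespace WGraph

variable (G : WGraph)

/-- Edge set of the induced subgraph `(G−S)[Z]`: edges of `G − S` with both
ends in `Z`. -/
def indEdges (S Z : Finset ℕ) : Finset ℕ :=
  (G.E \ S).filter fun e => (G.ends e).1 ∈ Z ∧ (G.ends e).2 ∈ Z

/-- The cut `E(Z, Zᶜ)` in `G − S`: edges of `G − S` with exactly one end in `Z`. -/
def cutEdges (S Z : Finset ℕ) : Finset ℕ :=
  (G.E \ S).filter fun e =>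
    ((G.ends e).1 ∈ Z ∧ (G.ends e).2 ∉ Z) ∨ ((G.ends e).1 ∉ Z ∧ (G.ends e).2 ∈ Z)

/-- Adjacency via an edge belonging to `F ∩ E`. -/
def adjOn (F : Finset ℕ) (u v : ℕ) : Prop :=
  ∃ e ∈ F ∩ G.E, G.ends e = (u, v) ∨ G.ends e = (v, u)

/-- Number of connected components of the subgraph with vertex set `W` and
edge set `F`. -/
noncomputable def ncomp (W F : Finset ℕ) : ℕ :=
  Nat.card (Quot (fun u v : {x : ℕ // x ∈ W} => G.adjOn F u.1 v.1))

/-- The subgraph with vertex set `W` and edge set `F` is connected. -/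
def ConnSub (W F : Finset ℕ) : Prop := G.ncomp W F = 1

/-- `G` is connected. -/
def Connected : Prop := G.ConnSub G.V G.E

/-- Genus of the subgraph with vertex set `W` and edge set `F`:
`∑_{v ∈ W} w(v) − |W| + |F| + c`. -/
noncomputable def subGenus (W F : Finset ℕ) : ℤ :=
  (∑ v ∈ W, (G.w v : ℤ)) - (W.card : ℤ) + (((F ∩ G.E).card : ℤ)) + (G.ncomp W F : ℤ)

/-- The genus of `G`. -/
noncomputable def genus : ℤ := G.subGenus G.V G.E

/-- The degree of a vertex: the number of half-edges having `v` as end. -/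
def deg (v : ℕ) : ℕ :=
  ∑ e ∈ G.E, ((if (G.ends e).1 = v then 1 else 0) + (if (G.ends e).2 = v then 1 else 0))

/-- `e` is a bridge of `G − S`: removing it increases the number of connected
components. -/
def IsBridge (S : Finset ℕ) (e : ℕ) : Prop :=
  e ∈ G.E \ S ∧ G.ncomp G.V (G.E \ S) < G.ncomp G.V (G.E \ insert e S)

/-- The set of bridges of `G − S`. -/
noncomputable def bridges (S : Finset ℕ) : Finset ℕ := (G.E \ S).filter (G.IsBridge S)

/-- `T` is a cut of `G`, i.e. `T = E(Z, Zᶜ)` for some `∅ ⊊ Z ⊊ V`. -/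
def IsCut (T : Finset ℕ) : Prop :=
  ∃ Z, Z ⊆ G.V ∧ Z.Nonempty ∧ Z ≠ G.V ∧ T = G.cutEdges ∅ Z

/-- `W` is (the vertex set of) a connected component of `G − S`. -/
def IsCompOf (S W : Finset ℕ) : Prop :=
  W ⊆ G.V ∧ W.Nonempty ∧ G.ConnSub W (G.indEdges S W) ∧ G.cutEdges S W = ∅

/-- The poset `A^b_G`: for `b = 0` the sets `S ⊆ E` with `G − S` bridgeless,
for `b = 1` the sets `S ⊆ E` with `G − S` connected. -/
def Ab (b : ℕ) (S : Finset ℕ) : Prop :=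
  S ⊆ G.E ∧ ((b = 0 ∧ ∀ e, ¬ G.IsBridge S e) ∨ (b = 1 ∧ G.ConnSub G.V (G.E \ S)))

/-- `G` is a stable graph of genus `g`: connected, of genus `g`, and every
vertex of weight `0` has degree at least `3`. -/
noncomputable def Stable (g : ℕ) : Prop :=
  G.Connected ∧ G.genus = (g : ℤ) ∧ ∀ v ∈ G.V, G.w v = 0 → 3 ≤ G.deg v

/-! ### Generalized orientations on spanning subgraphs -/

/-- `O` is orientation data for the spanning subgraph `G − S` (it is defined
exactly on the edges of `G − S`). -/
def IsOrientOn (S : Finset ℕ) (O : Orient) : Prop :=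
  ∀ e, O e ≠ none ↔ e ∈ G.E \ S

/-- The set of bioriented edges of `O`. -/
def biE (O : Orient) : Finset ℕ := G.E.filter fun e => O e = some EdgeDir.bi

/-- `t^O_v`: the number of half-edges having `v` as target. -/
def tOr (O : Orient) (v : ℕ) : ℕ := ∑ e ∈ G.E, dirT (O e) (G.ends e) v

/-- `t^O(Z)`: the number of edges of `G − S` not contained in `(G−S)[Z]`
having a target in `Z`. -/
def tCut (S : Finset ℕ) (O : Orient) (Z : Finset ℕ) : ℕ :=
  ∑ e ∈ (G.E \ S) \ G.indEdges S Z, ∑ v ∈ Z, dirT (O e) (G.ends e) v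

/-- The divisor `d^O` of a `b`-orientation `O` on `G − S`:
`d^O_v = w(v) − 1 + t^O_v` if `G − S` has edges, and `d^O_v = w(v) − 1 + b`
otherwise; it is supported on `V`. -/
noncomputable def divOr (S : Finset ℕ) (b : ℕ) (O : Orient) : ℕ → ℤ :=
  fun v => if v ∈ G.V then
      (if G.E \ S = ∅ then (G.w v : ℤ) - 1 + (b : ℤ) else (G.w v : ℤ) - 1 + (G.tOr O v : ℤ))
    else 0

/-- Equivalence of generalized orientations on `G − S`:  both are orientations
on `G − S` and they have the same divisor. -/
noncomputable def equivOr (S : Finset ℕ) (b : ℕ) (O O' : Orient) : Prop :=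
  G.IsOrientOn S O ∧ G.IsOrientOn S O' ∧ G.divOr S b O = G.divOr S b O'

/-- `O` is a totally cyclic orientation on `G − S`: every nonempty cut
`E(Z,Zᶜ)` contains an edge with target in `Z` and an edge with target in `Zᶜ`. -/
def TotCyc (S : Finset ℕ) (O : Orient) : Prop :=
  ∀ Z : Finset ℕ, Z ⊆ G.V → Z.Nonempty → Z ≠ G.V → (G.cutEdges S Z).Nonempty →
    (∃ e ∈ G.cutEdges S Z, ∃ v ∈ Z, 0 < dirT (O e) (G.ends e) v) ∧
    (∃ e ∈ G.cutEdges S Z, ∃ v ∈ G.V \ Z, 0 < dirT (O e) (G.ends e) v)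

/-- `O` is `e₀`-rooted on `G − S`: for every `Z ⊊ V` with `e₀` an edge of
`(G−S)[Z]`, the cut `E(Z,Zᶜ)` contains an edge with target in `Zᶜ`. -/
def RootedAt (S : Finset ℕ) (O : Orient) (e₀ : ℕ) : Prop :=
  ∀ Z : Finset ℕ, Z ⊆ G.V → Z ≠ G.V → e₀ ∈ G.indEdges S Z →
    ∃ e ∈ G.cutEdges S Z, ∃ v ∈ G.V \ Z, 0 < dirT (O e) (G.ends e) v

/-- `O` is a rooted `1`-orientation on `G − S`:  it has exactly one bioriented
edge, at which it is rooted.  By convention, if `G − S` consists of a single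
vertex (and no edges), the empty orientation is rooted. -/
def Rooted1 (S : Finset ℕ) (O : Orient) : Prop :=
  (∃ e₀, G.biE O = {e₀} ∧ G.RootedAt S O e₀) ∨ (G.E \ S = ∅ ∧ G.V.card = 1)

/-- `O ∈ 𝒪^b(G−S)`:  for `b = 0`, a totally cyclic orientation on `G − S`;
for `b = 1`, a rooted `1`-orientation on `G − S`. -/
def MemOb (S : Finset ℕ) (b : ℕ) (O : Orient) : Prop :=
  G.IsOrientOn S O ∧
    ((b = 0 ∧ G.biE O = ∅ ∧ G.TotCyc S O) ∨ (b = 1 ∧ G.Rooted1 S O))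

/-- `O` is a `b`-orientation on `G − S` (exactly `b` bioriented edges; by
convention the empty orientation on a one-vertex edgeless graph counts as a
`1`-orientation). -/
def IsbOr (S : Finset ℕ) (b : ℕ) (O : Orient) : Prop :=
  G.IsOrientOn S O ∧
    ((G.biE O).card = b ∨ (G.E \ S = ∅ ∧ G.V.card = 1 ∧ b = 1))

/-! ### Posets of orientations on spanning subgraphs -/

/-- The order of `𝒪𝒫^b_G` on pairs `(S, O_S)`:  `(S,O_S) ≤ (T,O_T)` iff
`T ⊆ S` and the restriction of `O_T` to `G − S` is `O_S`. -/
def leOP (p q : Finset ℕ × Orient) : Prop :=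
  q.1 ⊆ p.1 ∧ restr q.2 (G.E \ p.1) = p.2

/-- The order of `𝒪̄𝒫^b_G` on pairs (representing classes): `(S,O̅_S) ≤ (T,O̅_T)`
iff `T ⊆ S` and some representative of `O̅_T` restricts on `G − S` to some
representative of `O̅_S`. -/
noncomputable def leOPbar (b : ℕ) (p q : Finset ℕ × Orient) : Prop :=
  q.1 ⊆ p.1 ∧ ∃ O', G.equivOr q.1 b O' q.2 ∧
    G.equivOr p.1 b (restr O' (G.E \ p.1)) p.2

/-- Equality in `𝒪̄𝒫^b_G`: same subgraph and equivalent orientations. -/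
noncomputable def eqOP (b : ℕ) (p q : Finset ℕ × Orient) : Prop :=
  p.1 = q.1 ∧ G.equivOr p.1 b p.2 q.2

/-- Membership in `𝒪𝒫^b_G`. -/
def POb (b : ℕ) (p : Finset ℕ × Orient) : Prop :=
  G.Ab b p.1 ∧ G.MemOb p.1 b p.2

/-! ### Stable divisors -/

/-- Stable divisors on `G − S` of degree `g(G−S) − c(G−S) + b` (`b = 0, 1`):
for `b = 1`, `G − S` is connected, the degree is `g(G−S)` and
`|d_Z| > g(Z) − 1` for every `Z ⊆ V`; for `b = 0`, the restriction of `d` to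
every connected component `W` of `G − S` has degree `g(W) − 1` and satisfies
`|d_Z| > g(Z) − 1` for every `∅ ≠ Z ⊊ W`. -/
noncomputable def StableDiv (S : Finset ℕ) (b : ℕ) (d : ℕ → ℤ) : Prop :=
  (∀ v, v ∉ G.V → d v = 0) ∧
  ((b = 1 ∧ G.ConnSub G.V (G.E \ S) ∧
      (∑ v ∈ G.V, d v) = G.subGenus G.V (G.E \ S) ∧
      ∀ Z ⊆ G.V, G.subGenus Z (G.indEdges S Z) - 1 < ∑ v ∈ Z, d v) ∨
   (b = 0 ∧ ∀ W, G.IsCompOf S W →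
      (∑ v ∈ W, d v) = G.subGenus W (G.indEdges S W) - 1 ∧
      ∀ Z ⊆ W, Z.Nonempty → Z ≠ W →
        G.subGenus Z (G.indEdges S Z) - 1 < ∑ v ∈ Z, d v))

/-! ### Contractions -/

/-- The relation identifying the two ends of each edge in `S₀`. -/
def conRel (S₀ : Finset ℕ) (u v : ℕ) : Prop :=
  ∃ e ∈ S₀ ∩ G.E, G.ends e = (u, v) ∨ G.ends e = (v, u)

/-- Representative (the least element) of the class of `v` under the
equivalence generated by identifying the ends of the edges in `S₀`. -/
noncomputable def crep (S₀ : Finset ℕ) (v : ℕ) : ℕ :=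
  sInf {u | Relation.EqvGen (G.conRel S₀) u v}

/-- The (weighted) edge contraction `G/S₀`: every connected component of the
subgraph spanned by `S₀` is contracted to a single vertex, whose weight is the
genus of that component; `E(G/S₀) = E(G) \ S₀`. -/
noncomputable def contract (S₀ : Finset ℕ) : WGraph where
  V := G.V.image (G.crep S₀)
  E := G.E \ S₀
  ends := fun e => (G.crep S₀ (G.ends e).1, G.crep S₀ (G.ends e).2)
  w := fun v =>
    (G.subGenus (G.V.filter fun u => G.crep S₀ u = v)
      (G.indEdges (G.E \ S₀) (G.V.filter fun u => G.crep S₀ u = v))).toNat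
  ends_mem := by
    intro e he
    rw [Finset.mem_sdiff] at he
    exact ⟨Finset.mem_image_of_mem _ (G.ends_mem e he.1).1,
           Finset.mem_image_of_mem _ (G.ends_mem e he.1).2⟩

/-- Deletion of the edges in `T` (a spanning subgraph, as a graph). -/
def ddel (T : Finset ℕ) : WGraph where
  V := G.V
  E := G.E \ T
  ends := G.ends
  w := G.w
  ends_mem := fun e he => G.ends_mem e (Finset.mem_sdiff.mp he).1

/-- Pullback `γ* T` of an edge set along the contraction `γ : G → G/S₀`:
`T ∪ (G−T)_br` for `b = 0`, and `T` for `b = 1`. -/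
noncomputable def pullStar (b : ℕ) (T : Finset ℕ) : Finset ℕ :=
  if b = 0 then T ∪ G.bridges T else T

/-- Pushforward of a divisor along the contraction `γ : G → G/S₀`:
`(γ_* d)_v = ∑_{z ∈ γ⁻¹(v)} d_z`. -/
noncomputable def pushDiv (S₀ : Finset ℕ) (d : ℕ → ℤ) : ℕ → ℤ :=
  fun v => ∑ z ∈ G.V.filter (fun u => G.crep S₀ u = v), d z

/-- The divisor `c^{γ,S}` on `G/S₀`: `c^{γ,S}_v = #{e ∈ S₀ ∩ S : γ(e) = v}`. -/
noncomputable def cGamma (S₀ S : Finset ℕ) : ℕ → ℤ :=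
  fun v => ((((S₀ ∩ S) ∩ G.E).filter (fun e => G.crep S₀ (G.ends e).1 = v)).card : ℤ)

/-- The relation "`q` is a value of `γ̄_*` at `p`" for the contraction
`γ : G → G/S₀` acting on classes of orientations: `q` is the restriction to
`(G/S₀) − γ_* S` of a representative of the class of `p` having no bioriented
edge in `S₀` (when `(G/S₀) − γ_*S` has no edges, any representative serves). -/
noncomputable def pushRel (S₀ : Finset ℕ) (b : ℕ) (p q : Finset ℕ × Orient) : Prop :=
  ∃ O', G.equivOr p.1 b O' p.2 ∧
    ((∀ e ∈ S₀, O' e ≠ some EdgeDir.bi) ∨ G.E \ (S₀ ∪ p.1) = ∅) ∧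
    q.1 = p.1 \ S₀ ∧ q.2 = restr O' (G.E \ (S₀ ∪ p.1))

/-! ### Isomorphisms and directed reachability -/

/-- `(fV, fE)` is an isomorphism from `G` to `H`. -/
def IsoMaps (H : WGraph) (fV fE : ℕ → ℕ) : Prop :=
  Set.BijOn fV ↑G.V ↑H.V ∧ Set.BijOn fE ↑G.E ↑H.E ∧
  (∀ e ∈ G.E, H.ends (fE e) = (fV (G.ends e).1, fV (G.ends e).2) ∨
              H.ends (fE e) = (fV (G.ends e).2, fV (G.ends e).1)) ∧
  (∀ v ∈ G.V, H.w (fV v) = G.w v)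

/-- `G` and `H` are isomorphic graphs. -/
def Iso (H : WGraph) : Prop := ∃ fV fE, G.IsoMaps H fV fE

/-- The edge-contraction relation: `G ≤ H` iff `H = G/S₀` (up to isomorphism)
for some `S₀ ⊆ E(G)`. -/
noncomputable def contractLE (H : WGraph) : Prop :=
  ∃ S₀ ⊆ G.E, (G.contract S₀).Iso H

/-- One step from `u` to `v` along an `O`-directed edge (a bioriented edge may
be traversed in both directions). -/
def dirStep (O : Orient) (u v : ℕ) : Prop :=
  ∃ e ∈ G.E,
    (O e = some EdgeDir.fwd ∧ G.ends e = (u, v)) ∨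
    (O e = some EdgeDir.bwd ∧ G.ends e = (v, u)) ∨
    (O e = some EdgeDir.bi ∧ (G.ends e = (u, v) ∨ G.ends e = (v, u)))

/-- There is an `O`-directed path from the (bioriented) edge `e` to the
vertex `v`: a directed path starting at one of the ends of `e` and ending
at `v`. -/
def dirReachFromEdge (O : Orient) (e v : ℕ) : Prop :=
  ∃ u, ((G.ends e).1 = u ∨ (G.ends e).2 = u) ∧
    Relation.ReflTransGen (G.dirStep O) u v

end WGraph

/-! ### Generic poset gadgets (for sets with an order, modulo an equivalence) -/

/-- `le` is a partial order on `{a | P a}` modulo the identification `eqv`. -/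
def IsPartialOrderOnMod {α : Type*} (P : α → Prop) (eqv le : α → α → Prop) : Prop :=
  (∀ a, P a → le a a) ∧
  (∀ a b c, P a → P b → P c → le a b → le b c → le a c) ∧
  (∀ a b, P a → P b → le a b → le b a → eqv a b)

/-- `le` is a partial order on `{a | P a}`. -/
def IsPartialOrderOn {α : Type*} (P : α → Prop) (le : α → α → Prop) : Prop :=
  IsPartialOrderOnMod P (· = ·) le

/-- `a'` covers `a` in `{a | P a}` ordered by `le`, modulo `eqv`. -/
def CoversOnMod {α : Type*} (P : α → Prop) (eqv le : α → α → Prop) (a a' : α) : Prop :=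
  P a ∧ P a' ∧ le a a' ∧ ¬ eqv a a' ∧
    ∀ c, P c → le a c → le c a' → (eqv c a ∨ eqv c a')

/-- `ρ` is a rank on `{a | P a}` ordered by `le`, modulo `eqv`:  along every
covering relation it increases by exactly `1`. -/
def IsRankOnMod {α : Type*} (P : α → Prop) (eqv le : α → α → Prop) (ρ : α → ℕ) : Prop :=
  ∀ a a', CoversOnMod P eqv le a a' → ρ a' = ρ a + 1

/-- `a'` covers `a` in `{a | P a}` ordered by `le`. -/
def CoversOn {α : Type*} (P : α → Prop) (le : α → α → Prop) : α → α → Prop :=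
  CoversOnMod P (· = ·) le

/-- `ρ` is a rank on `{a | P a}` ordered by `le`. -/
def IsRankOn {α : Type*} (P : α → Prop) (le : α → α → Prop) (ρ : α → ℕ) : Prop :=
  IsRankOnMod P (· = ·) le ρ

/-- `f` is a quotient of posets from `({a | P a}, lea)` onto `({b | Q b}, leb)`:
an order-preserving surjection such that any relation downstairs lifts to a
relation upstairs. -/
def IsPosetQuotient {α β : Type*} (P : α → Prop) (Q : β → Prop)
    (lea : α → α → Prop) (leb : β → β → Prop) (f : α → β) : Prop :=
  (∀ a, P a → Q (f a)) ∧
  (∀ a a', P a → P a' → lea a a' → leb (f a) (f a')) ∧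
  (∀ b, Q b → ∃ a, P a ∧ f a = b) ∧
  (∀ b b', Q b → Q b' → leb b b' →
    ∃ a a', P a ∧ P a' ∧ f a = b ∧ f a' = b' ∧ lea a a')

/-! ### Structures over the moduli of stable graphs -/

/-- Pairs `(G, S)` with `G` stable of genus `g` and `S ∈ A^b_G`. -/
noncomputable def PairStab (g b : ℕ) (p : WGraph × Finset ℕ) : Prop :=
  p.1.Stable g ∧ p.1.Ab b p.2

/-- Isomorphism of pairs `(G, S)`. -/
def PairIso (p q : WGraph × Finset ℕ) : Prop :=
  ∃ fV fE, p.1.IsoMaps q.1 fV fE ∧ p.2.image fE = q.2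

/-- The order on `A^b_g`: `(G,S) ≤ (H,T)` iff there is a contraction
`γ : G → H` (a contraction of `G` followed by an isomorphism onto `H`) with
`γ* T ⊆ S`. -/
noncomputable def AgLE (b : ℕ) (p q : WGraph × Finset ℕ) : Prop :=
  ∃ S₀ ⊆ p.1.E, ∃ fV fE, (p.1.contract S₀).IsoMaps q.1 fV fE ∧
    p.1.pullStar b (((p.1.contract S₀).E).filter fun e => fE e ∈ q.2) ⊆ p.2

/-- Triples `(G, S, O̅_S)` with `G` stable of genus `g`, `S ∈ A^b_G` and
`O_S ∈ 𝒪^b(G−S)` (representing elements of `𝒪̄𝒫^b_g`). -/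
noncomputable def TripP (g b : ℕ) (x : WGraph × Finset ℕ × Orient) : Prop :=
  x.1.Stable g ∧ x.1.Ab b x.2.1 ∧ x.1.MemOb x.2.1 b x.2.2

/-- Identification of triples: an isomorphism of the underlying graphs
carrying the subgraph and the class of the orientation (i.e. its divisor) of
one to the other. -/
noncomputable def TripEq (b : ℕ) (x y : WGraph × Finset ℕ × Orient) : Prop :=
  ∃ fV fE, x.1.IsoMaps y.1 fV fE ∧ x.2.1.image fE = y.2.1 ∧
    ∀ v ∈ x.1.V, y.1.divOr y.2.1 b y.2.2 (fV v) = x.1.divOr x.2.1 b x.2.2 v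

/-- The order on `𝒪̄𝒫^b_g`: `(G, O̅_S) ≤ (H, O̅_T)` iff there is a contraction
`γ : G → H` with `γ* T ⊆ S` and `γ̄_* O̅_S ≤ O̅_T`, the latter meaning that the
restriction of `O̅_T` to `H − γ_* S` equals `γ̄_* O̅_S` (compared through the
isomorphism, via the divisors). -/
noncomputable def OPgLE (b : ℕ) (x y : WGraph × Finset ℕ × Orient) : Prop :=
  ∃ S₀ ⊆ x.1.E, ∃ fV fE, (x.1.contract S₀).IsoMaps y.1 fV fE ∧
    x.1.pullStar b (((x.1.contract S₀).E).filter fun e => fE e ∈ y.2.1) ⊆ x.2.1 ∧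
    ∃ O', x.1.equivOr x.2.1 b O' x.2.2 ∧
      ((∀ e ∈ S₀, O' e ≠ some EdgeDir.bi) ∨ x.1.E \ (S₀ ∪ x.2.1) = ∅) ∧
      ∀ v ∈ (x.1.contract S₀).V,
        y.1.divOr ((x.2.1 \ S₀).image fE) b
            (restr y.2.2 (y.1.E \ (x.2.1 \ S₀).image fE)) (fV v)
          = (x.1.contract S₀).divOr (x.2.1 \ S₀) b
              (restr O' (x.1.E \ (S₀ ∪ x.2.1))) v

/-! ### Auxiliary lemmas for Statement 4 -/

section ListAux

variable {α : Type*}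

lemma myGetLastD_append (l₁ l₂ : List α) (a d : α) :
    (l₁ ++ a :: l₂).getLastD d = l₂.getLastD a := by
  induction l₁ generalizing d with
  | nil => rw [List.nil_append, List.getLastD_cons]
  | cons x t ih => rw [List.cons_append, List.getLastD_cons]; exact ih x

lemma myGetLastD_mem (l : List α) (a : α) : l.getLastD a ∈ a :: l := by
  induction l generalizing a with
  | nil => simp
  | cons b t ih =>
    rw [List.getLastD_cons]
    rcases List.mem_cons.mp (ih b) with h | h
    · rw [h]; exact List.mem_cons.mpr (Or.inr (List.mem_cons.mpr (Or.inl rfl)))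
    · exact List.mem_cons.mpr (Or.inr (List.mem_cons.mpr (Or.inr h)))

lemma myChainTransfer {r r' : α → α → Prop} :
    ∀ (l : List α) (x : α), List.Chain r x l →
      (∀ a b, a ∈ x :: l → b ∈ x :: l → r a b → r' a b) → List.Chain r' x l := by
  intro l
  induction l with
  | nil => intro x _ _; exact List.Chain.nil
  | cons y t ih =>
    intro x hc h
    simp only [List.Chain, List.chain_cons] at hc ⊢
    refine ⟨h x y (by simp) (by simp) hc.1, ih y hc.2 ?_⟩
    intro a b ha hb hr
    refine h a b ?_ ?_ hr
    · rcases List.mem_cons.mp ha with h' | h' <;> simp [h']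
    · rcases List.mem_cons.mp hb with h' | h' <;> simp [h']

lemma myDedup {r : α → α → Prop} :
    ∀ (n : ℕ) (l : List α) (u : α), l.length ≤ n → List.Chain r u l →
      ∃ l', List.Chain r u l' ∧ l'.getLastD u = l.getLastD u ∧ (u :: l').Nodup ∧
        ∀ a ∈ l', a ∈ l := by
  intro n
  induction n with
  | zero =>
    intro l u hl _
    rw [Nat.le_zero, List.length_eq_zero_iff] at hl
    subst hl
    exact ⟨[], List.Chain.nil, rfl, by simp, by simp⟩
  | succ n ih =>
    intro l u hl hc
    by_cases hu : u ∈ l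
    · obtain ⟨s, t, rfl⟩ := List.append_of_mem hu
      have hct : List.Chain r u t := (List.isChain_cons_split.mp hc).2
      have hlt : t.length ≤ n := by
        simp only [List.length_append, List.length_cons] at hl; omega
      obtain ⟨l', h1, h2, h3, h4⟩ := ih t u hlt hct
      refine ⟨l', h1, by rw [h2, myGetLastD_append], h3, ?_⟩
      intro a ha
      have := h4 a ha
      simp only [List.mem_append, List.mem_cons]
      tauto
    · cases l with
      | nil => exact ⟨[], List.Chain.nil, rfl, by simp, by simp⟩
      | cons x t =>
        simp only [List.Chain, List.chain_cons] at hc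
        have hlt : t.length ≤ n := by simp at hl; omega
        obtain ⟨l', h1, h2, h3, h4⟩ := ih t x hlt hc.2
        refine ⟨x :: l', List.chain_cons.mpr ⟨hc.1, h1⟩, ?_, ?_, ?_⟩
        · rw [List.getLastD_cons, List.getLastD_cons, h2]
        · rw [List.nodup_cons]
          refine ⟨?_, h3⟩
          intro hmem
          rcases List.mem_cons.mp hmem with h | h
          · exact hu (by simp [h])
          · exact hu (List.mem_cons.mpr (Or.inr (h4 u h)))
        · intro a ha
          rcases List.mem_cons.mp ha with h | h
          · simp [h]
          · exact List.mem_cons.mpr (Or.inr (h4 a h))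

lemma myWalk {r : α → α → Prop} {u v : α} (h : Relation.ReflTransGen r u v) :
    ∃ l, List.Chain r u l ∧ l.getLastD u = v ∧ (u :: l).Nodup := by
  have base : ∃ l, List.Chain r u l ∧ l.getLastD u = v := by
    induction h using Relation.ReflTransGen.head_induction_on with
    | refl => exact ⟨[], List.Chain.nil, rfl⟩
    | @head a c hr _ ih =>
      obtain ⟨l, h1, h2⟩ := ih
      exact ⟨c :: l, List.chain_cons.mpr ⟨hr, h1⟩, by rw [List.getLastD_cons]; exact h2⟩
  obtain ⟨l, h1, h2⟩ := base
  obtain ⟨l', g1, g2, g3, _⟩ := myDedup l.length l u le_rfl h1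
  exact ⟨l', g1, by rw [g2, h2], g3⟩

end ListAux

namespace WGraph

variable (G : WGraph)

lemma reach_tail {O : Orient} {f v v' : ℕ} (h : G.dirReachFromEdge O f v)
    (hs : G.dirStep O v v') : G.dirReachFromEdge O f v' := by
  obtain ⟨u, hu, hp⟩ := h
  exact ⟨u, hu, hp.tail hs⟩

lemma reach_of_rooted {O : Orient} {f : ℕ} (hO : G.IsOrientOn ∅ O) (hf : f ∈ G.E)
    (hr : G.RootedAt ∅ O f) : ∀ v ∈ G.V, G.dirReachFromEdge O f v := by
  classical
  set Z := G.V.filter (fun v => G.dirReachFromEdge O f v) with hZdef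
  have hsub : Z ⊆ G.V := Finset.filter_subset _ _
  have hstep : ∀ m v, m ∈ Z → G.dirStep O m v → v ∈ G.V → v ∈ Z := by
    intro m v hm hs hv
    rw [hZdef, Finset.mem_filter] at hm ⊢
    exact ⟨hv, G.reach_tail hm.2 hs⟩
  suffices h : Z = G.V by
    intro v hv
    have : v ∈ Z := h ▸ hv
    exact (Finset.mem_filter.mp this).2
  by_contra hne
  have hind : f ∈ G.indEdges ∅ Z := by
    rw [WGraph.indEdges, Finset.mem_filter]
    refine ⟨by simp [hf], ?_, ?_⟩
    · exact Finset.mem_filter.mpr ⟨(G.ends_mem f hf).1,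
        ⟨(G.ends f).1, Or.inl rfl, Relation.ReflTransGen.refl⟩⟩
    · exact Finset.mem_filter.mpr ⟨(G.ends_mem f hf).2,
        ⟨(G.ends f).2, Or.inr rfl, Relation.ReflTransGen.refl⟩⟩
  obtain ⟨e₀, hcut, v, hv, hd⟩ := hr Z hsub hne hind
  rw [Finset.mem_sdiff] at hv
  rw [WGraph.cutEdges, Finset.mem_filter, Finset.mem_sdiff] at hcut
  have he₀E : e₀ ∈ G.E := hcut.1.1
  rcases ho : O e₀ with _ | d
  · rw [ho] at hd; simp [dirT] at hd
  rw [ho] at hd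
  cases d with
  | fwd =>
    simp only [dirT] at hd
    have hd2 : (G.ends e₀).2 = v := by by_contra hc; simp [hc] at hd
    have hb : (G.ends e₀).2 ∉ Z := hd2 ▸ hv.2
    have ha : (G.ends e₀).1 ∈ Z := by rcases hcut.2 with h | h; exacts [h.1, absurd h.2 hb]
    exact hv.2 (hstep _ v ha ⟨e₀, he₀E, Or.inl ⟨ho, by rw [← hd2]⟩⟩ hv.1)
  | bwd =>
    simp only [dirT] at hd
    have hd1 : (G.ends e₀).1 = v := by by_contra hc; simp [hc] at hd
    have hb : (G.ends e₀).1 ∉ Z := hd1 ▸ hv.2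
    have ha : (G.ends e₀).2 ∈ Z := by rcases hcut.2 with h | h; exacts [absurd h.1 hb, h.2]
    exact hv.2 (hstep _ v ha ⟨e₀, he₀E, Or.inr (Or.inl ⟨ho, by rw [← hd1]⟩)⟩ hv.1)
  | bi =>
    by_cases h1 : (G.ends e₀).1 = v
    · have hb : (G.ends e₀).1 ∉ Z := h1 ▸ hv.2
      have ha : (G.ends e₀).2 ∈ Z := by rcases hcut.2 with h | h; exacts [absurd h.1 hb, h.2]
      exact hv.2 (hstep _ v ha ⟨e₀, he₀E, Or.inr (Or.inr ⟨ho, Or.inr (by rw [← h1])⟩)⟩ hv.1)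
    · have h2 : (G.ends e₀).2 = v := by
        simp only [dirT, h1] at hd
        by_contra hc; simp [hc] at hd
      have hb : (G.ends e₀).2 ∉ Z := h2 ▸ hv.2
      have ha : (G.ends e₀).1 ∈ Z := by rcases hcut.2 with h | h; exacts [h.1, absurd h.2 hb]
      exact hv.2 (hstep _ v ha ⟨e₀, he₀E, Or.inr (Or.inr ⟨ho, Or.inl (by rw [← h2])⟩)⟩ hv.1)

lemma rooted_of_reach {O : Orient} {f : ℕ}
    (hreach : ∀ v ∈ G.V, G.dirReachFromEdge O f v) : G.RootedAt ∅ O f := by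
  intro Z hZ hne hind
  obtain ⟨v₀, hv₀V, hv₀Z⟩ := Finset.exists_of_ssubset (lt_of_le_of_ne hZ hne)
  obtain ⟨u, hu, hp⟩ := hreach v₀ hv₀V
  rw [WGraph.indEdges, Finset.mem_filter] at hind
  have huZ : u ∈ Z := by rcases hu with h | h; exacts [h ▸ hind.2.1, h ▸ hind.2.2]
  have key : ∀ v, Relation.ReflTransGen (G.dirStep O) u v → v ∉ Z →
      ∃ e ∈ G.cutEdges ∅ Z, ∃ x ∈ G.V \ Z, 0 < dirT (O e) (G.ends e) x := by
    intro v h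
    induction h with
    | refl => exact fun hc => absurd huZ hc
    | @tail m v' hmid hstep ih =>
      intro hv'
      by_cases hm : m ∈ Z
      · obtain ⟨e₀, he₀, hc⟩ := hstep
        rcases hc with ⟨ho, hends⟩ | ⟨ho, hends⟩ | ⟨ho, hends | hends⟩
        · refine ⟨e₀, ?_, v', ?_, ?_⟩
          · rw [WGraph.cutEdges, Finset.mem_filter]
            exact ⟨by simp [he₀], Or.inl (by rw [hends]; exact ⟨hm, hv'⟩)⟩
          · rw [Finset.mem_sdiff]
            refine ⟨?_, hv'⟩
            have := (G.ends_mem e₀ he₀).2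
            rwa [hends] at this
          · rw [ho, hends]; simp [dirT]
        · refine ⟨e₀, ?_, v', ?_, ?_⟩
          · rw [WGraph.cutEdges, Finset.mem_filter]
            exact ⟨by simp [he₀], Or.inr (by rw [hends]; exact ⟨hv', hm⟩)⟩
          · rw [Finset.mem_sdiff]
            refine ⟨?_, hv'⟩
            have := (G.ends_mem e₀ he₀).1
            rwa [hends] at this
          · rw [ho, hends]; simp [dirT]
        · refine ⟨e₀, ?_, v', ?_, ?_⟩
          · rw [WGraph.cutEdges, Finset.mem_filter]
            exact ⟨by simp [he₀], Or.inl (by rw [hends]; exact ⟨hm, hv'⟩)⟩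
          · rw [Finset.mem_sdiff]
            refine ⟨?_, hv'⟩
            have := (G.ends_mem e₀ he₀).2
            rwa [hends] at this
          · rw [ho, hends]; simp [dirT]
        · refine ⟨e₀, ?_, v', ?_, ?_⟩
          · rw [WGraph.cutEdges, Finset.mem_filter]
            exact ⟨by simp [he₀], Or.inr (by rw [hends]; exact ⟨hv', hm⟩)⟩
          · rw [Finset.mem_sdiff]
            refine ⟨?_, hv'⟩
            have := (G.ends_mem e₀ he₀).1
            rwa [hends] at this
          · rw [ho, hends]; simp [dirT]
      · exact ih hm
  exact key v₀ hp hv₀Z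

lemma cut_nonempty (hG : G.Connected) {Z : Finset ℕ} (hZ : Z ⊆ G.V)
    (hne : Z.Nonempty) (hneV : Z ≠ G.V) : (G.cutEdges ∅ Z).Nonempty := by
  by_contra hcut
  rw [Finset.not_nonempty_iff_eq_empty] at hcut
  obtain ⟨z, hz⟩ := hne
  obtain ⟨y, hyV, hyZ⟩ := Finset.exists_of_ssubset (lt_of_le_of_ne hZ hneV)
  have hinv : ∀ a b : {x : ℕ // x ∈ G.V}, G.adjOn G.E a.1 b.1 → (a.1 ∈ Z ↔ b.1 ∈ Z) := by
    rintro a b ⟨e, he, hends⟩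
    have heE : e ∈ G.E := (Finset.mem_inter.mp he).1
    have hnc : e ∉ G.cutEdges ∅ Z := by rw [hcut]; exact Finset.notMem_empty e
    rw [WGraph.cutEdges, Finset.mem_filter] at hnc
    push_neg at hnc
    have h2 := hnc (by simp [heE])
    rcases hends with h | h <;> rw [h] at h2 <;> simp at h2 <;> tauto
  have hone : Nat.card (Quot (fun u v : {x : ℕ // x ∈ G.V} => G.adjOn G.E u.1 v.1)) = 1 := hG
  have hsub : Subsingleton (Quot (fun u v : {x : ℕ // x ∈ G.V} => G.adjOn G.E u.1 v.1)) :=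
    ((Nat.card_eq_one_iff_unique).mp hone).1
  have hq := Subsingleton.elim
    (Quot.mk (fun u v : {x : ℕ // x ∈ G.V} => G.adjOn G.E u.1 v.1) ⟨z, hZ hz⟩)
    (Quot.mk _ ⟨y, hyV⟩)
  rw [Quot.eq] at hq
  have hiff : ∀ a b : {x : ℕ // x ∈ G.V},
      Relation.EqvGen (fun u v : {x : ℕ // x ∈ G.V} => G.adjOn G.E u.1 v.1) a b →
      (a.1 ∈ Z ↔ b.1 ∈ Z) := by
    intro a b h
    induction h with
    | rel a b h => exact hinv a b h
    | refl => exact Iff.rfl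
    | symm _ _ _ ih => exact ih.symm
    | trans _ _ _ _ _ ih₁ ih₂ => exact ih₁.trans ih₂
  exact hyZ ((hiff _ _ hq).mp hz)

end WGraph

lemma sum_dirT_none (Z : Finset ℕ) (p : ℕ × ℕ) :
    ∑ v ∈ Z, dirT none p v = 0 := by simp [dirT]

lemma sum_dirT_fwd (Z : Finset ℕ) (p : ℕ × ℕ) :
    ∑ v ∈ Z, dirT (some EdgeDir.fwd) p v = if p.2 ∈ Z then 1 else 0 := by
  classical
  simp [dirT, Finset.sum_ite_eq]

lemma sum_dirT_bwd (Z : Finset ℕ) (p : ℕ × ℕ) :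
    ∑ v ∈ Z, dirT (some EdgeDir.bwd) p v = if p.1 ∈ Z then 1 else 0 := by
  classical
  simp [dirT, Finset.sum_ite_eq]

lemma sum_dirT_bi (Z : Finset ℕ) (p : ℕ × ℕ) :
    ∑ v ∈ Z, dirT (some EdgeDir.bi) p v
      = (if p.1 ∈ Z then 1 else 0) + (if p.2 ∈ Z then 1 else 0) := by
  classical
  simp [dirT, Finset.sum_add_distrib, Finset.sum_ite_eq]

namespace WGraph

variable (G : WGraph)

lemma move (O₁ : Orient) (f g u : ℕ)
    (hO : G.IsOrientOn ∅ O₁) (hbi : G.biE O₁ = {f}) (hr : G.RootedAt ∅ O₁ f)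
    (hgE : g ∈ G.E) (hgf : g ≠ f)
    (hu : (G.ends f).1 = u ∨ (G.ends f).2 = u)
    (hsrc : (O₁ g = some EdgeDir.fwd ∧ (G.ends g).1 = u) ∨
            (O₁ g = some EdgeDir.bwd ∧ (G.ends g).2 = u)) :
    ∃ O₂ : Orient, G.IsOrientOn ∅ O₂ ∧ G.biE O₂ = {g} ∧ G.RootedAt ∅ O₂ g ∧
      G.tOr O₂ = G.tOr O₁ ∧ ∀ e₀, e₀ ≠ f → e₀ ≠ g → O₂ e₀ = O₁ e₀ := by
  classical
  have hfmem : f ∈ G.biE O₁ := by rw [hbi]; exact Finset.mem_singleton_self f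
  have hfE : f ∈ G.E := (Finset.mem_filter.mp hfmem).1
  have hfbi : O₁ f = some EdgeDir.bi := (Finset.mem_filter.mp hfmem).2
  set O₂ : Orient := fun e₀ =>
    if e₀ = g then some EdgeDir.bi
    else if e₀ = f then (if (G.ends f).1 = u then some EdgeDir.fwd else some EdgeDir.bwd)
    else O₁ e₀ with hO₂
  have hO₂g : O₂ g = some EdgeDir.bi := by simp [hO₂]
  have hO₂f : O₂ f = (if (G.ends f).1 = u then some EdgeDir.fwd else some EdgeDir.bwd) := by
    simp [hO₂, Ne.symm hgf]
  have hoff : ∀ e₀, e₀ ≠ f → e₀ ≠ g → O₂ e₀ = O₁ e₀ := by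
    intro e₀ h1 h2; simp [hO₂, h1, h2]
  refine ⟨O₂, ?_, ?_, ?_, ?_, hoff⟩
  · -- IsOrientOn
    intro e₀
    by_cases h2 : e₀ = g
    · subst h2; rw [hO₂g]; simp [hgE]
    · by_cases h1 : e₀ = f
      · subst h1; rw [hO₂f]; split <;> simp [hfE]
      · rw [hoff e₀ h1 h2]; exact hO e₀
  · -- biE
    ext e₀
    rw [WGraph.biE, Finset.mem_filter, Finset.mem_singleton]
    constructor
    · rintro ⟨heE, hbi₀⟩
      by_cases h2 : e₀ = g
      · exact h2
      · exfalso
        by_cases h1 : e₀ = f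
        · subst h1; rw [hO₂f] at hbi₀; revert hbi₀; split <;> simp
        · rw [hoff e₀ h1 h2] at hbi₀
          have : e₀ ∈ G.biE O₁ := Finset.mem_filter.mpr ⟨heE, hbi₀⟩
          rw [hbi, Finset.mem_singleton] at this
          exact h1 this
    · rintro rfl; exact ⟨hgE, hO₂g⟩
  · -- RootedAt
    intro Z hZsub hZne hind
    rw [WGraph.indEdges, Finset.mem_filter] at hind
    have huZ : u ∈ Z := by rcases hsrc with ⟨_, h⟩ | ⟨_, h⟩; exacts [h ▸ hind.2.1, h ▸ hind.2.2]
    by_cases hin : (G.ends f).1 ∈ Z ∧ (G.ends f).2 ∈ Z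
    · have hfind : f ∈ G.indEdges ∅ Z := by
        rw [WGraph.indEdges, Finset.mem_filter]; exact ⟨by simp [hfE], hin⟩
      obtain ⟨e₀, hc, v, hv, hd⟩ := hr Z hZsub hZne hfind
      refine ⟨e₀, hc, v, hv, ?_⟩
      have h1 : e₀ ≠ f := by
        intro h; subst h
        rw [WGraph.cutEdges, Finset.mem_filter] at hc
        rcases hc.2 with h | h; exacts [h.2 hin.2, h.1 hin.1]
      have h2 : e₀ ≠ g := by
        intro h; subst h
        rw [WGraph.cutEdges, Finset.mem_filter] at hc
        rcases hc.2 with h | h; exacts [h.2 hind.2.2, h.1 hind.2.1]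
      rwa [hoff e₀ h1 h2]
    · rw [not_and_or] at hin
      by_cases hp1 : (G.ends f).1 = u
      · have h2Z : (G.ends f).2 ∉ Z := by
          rcases hin with h | h
          · exact absurd (by rw [hp1]; exact huZ : (G.ends f).1 ∈ Z) h
          · exact h
        refine ⟨f, ?_, (G.ends f).2, ?_, ?_⟩
        · rw [WGraph.cutEdges, Finset.mem_filter]
          exact ⟨by simp [hfE], Or.inl ⟨by rw [hp1]; exact huZ, h2Z⟩⟩
        · rw [Finset.mem_sdiff]; exact ⟨(G.ends_mem f hfE).2, h2Z⟩
        · rw [hO₂f, if_pos hp1]; simp [dirT]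
      · have hp2 : (G.ends f).2 = u := hu.resolve_left hp1
        have h1Z : (G.ends f).1 ∉ Z := by
          rcases hin with h | h
          · exact h
          · exact absurd (by rw [hp2]; exact huZ : (G.ends f).2 ∈ Z) h
        refine ⟨f, ?_, (G.ends f).1, ?_, ?_⟩
        · rw [WGraph.cutEdges, Finset.mem_filter]
          exact ⟨by simp [hfE], Or.inr ⟨h1Z, by rw [hp2]; exact huZ⟩⟩
        · rw [Finset.mem_sdiff]; exact ⟨(G.ends_mem f hfE).1, h1Z⟩
        · rw [hO₂f, if_neg hp1]; simp [dirT]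
  · -- tOr
    funext v
    have hfg : f ∈ G.E.erase g := Finset.mem_erase.mpr ⟨Ne.symm hgf, hfE⟩
    have expand : ∀ Oo : Orient, G.tOr Oo v =
        dirT (Oo g) (G.ends g) v + (dirT (Oo f) (G.ends f) v +
          ∑ e₀ ∈ (G.E.erase g).erase f, dirT (Oo e₀) (G.ends e₀) v) := by
      intro Oo
      rw [WGraph.tOr, ← Finset.add_sum_erase _ _ hgE, ← Finset.add_sum_erase _ _ hfg]
    rw [expand O₂, expand O₁]
    have hrest : ∑ e₀ ∈ (G.E.erase g).erase f, dirT (O₂ e₀) (G.ends e₀) v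
        = ∑ e₀ ∈ (G.E.erase g).erase f, dirT (O₁ e₀) (G.ends e₀) v := by
      apply Finset.sum_congr rfl
      intro e₀ he₀
      rw [Finset.mem_erase] at he₀
      rw [hoff e₀ he₀.1 (Finset.mem_erase.mp he₀.2).1]
    rw [hrest, hO₂g, hO₂f, hfbi]
    rcases hsrc with ⟨ho, hq⟩ | ⟨ho, hq⟩ <;> rw [ho] <;> split_ifs with hp1
    · simp only [dirT]; rw [hq, hp1]; ring
    · have hp2 : (G.ends f).2 = u := hu.resolve_left hp1
      simp only [dirT]; rw [hq, hp2]; ring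
    · simp only [dirT]; rw [hq, hp1]; ring
    · have hp2 : (G.ends f).2 = u := hu.resolve_left hp1
      simp only [dirT]; rw [hq, hp2]; ring

lemma lemC : ∀ (l : List ℕ) (O₁ : Orient) (f u e' : ℕ),
    G.IsOrientOn ∅ O₁ → G.biE O₁ = {f} → G.RootedAt ∅ O₁ f →
    ((G.ends f).1 = u ∨ (G.ends f).2 = u) →
    List.Chain (G.dirStep O₁) u l → (u :: l).Nodup →
    e' ∈ G.E → e' ≠ f →
    ((O₁ e' = some EdgeDir.fwd ∧ (G.ends e').1 = l.getLastD u) ∨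
     (O₁ e' = some EdgeDir.bwd ∧ (G.ends e').2 = l.getLastD u)) →
    ∃ O₂ : Orient, G.IsOrientOn ∅ O₂ ∧ G.biE O₂ = {e'} ∧ G.RootedAt ∅ O₂ e' ∧
      G.tOr O₂ = G.tOr O₁ := by
  intro l
  induction l with
  | nil =>
    intro O₁ f u e' hO hbi hr hu _ _ he'E he'f hsrc
    obtain ⟨O₂, h1, h2, h3, h4, _⟩ :=
      G.move O₁ f e' u hO hbi hr he'E he'f hu (by simpa using hsrc)
    exact ⟨O₂, h1, h2, h3, h4⟩
  | cons x t ih =>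
    intro O₁ f u e' hO hbi hr hu hchain hnodup he'E he'f hsrc
    simp only [List.Chain, List.chain_cons] at hchain
    obtain ⟨hstep, hchain'⟩ := hchain
    rw [List.getLastD_cons] at hsrc
    have hsP : t.getLastD x ∈ x :: t := myGetLastD_mem t x
    have hunot : u ∉ x :: t := (List.nodup_cons.mp hnodup).1
    have hnodup' : (x :: t).Nodup := (List.nodup_cons.mp hnodup).2
    have hus' : u ≠ t.getLastD x := fun h => hunot (h ▸ hsP)
    obtain ⟨g, hgE, hcase⟩ := hstep
    have hfmem : f ∈ G.biE O₁ := by rw [hbi]; exact Finset.mem_singleton_self f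
    have hfbi : O₁ f = some EdgeDir.bi := (Finset.mem_filter.mp hfmem).2
    rcases hcase with ⟨ho, hends⟩ | ⟨ho, hends⟩ | ⟨ho, hends⟩
    · -- g oriented forward u → x
      have hgf : g ≠ f := fun h => by rw [h, hfbi] at ho; simp at ho
      have hq1 : (G.ends g).1 = u := by rw [hends]
      obtain ⟨O₂', k1, k2, k3, k4, koff⟩ :=
        G.move O₁ f g u hO hbi hr hgE hgf hu (Or.inl ⟨ho, hq1⟩)
      have he'g : e' ≠ g := by
        intro h; subst h
        rcases hsrc with ⟨_, hs⟩ | ⟨ho', _⟩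
        · rw [hq1] at hs; exact hus' hs
        · rw [ho'] at ho; simp at ho
      have hchain₂ : List.Chain (G.dirStep O₂') x t := by
        apply myChainTransfer t x hchain'
        intro a b ha hb hst
        obtain ⟨e₀, he₀E, hc₀⟩ := hst
        have hau : a ≠ u := fun h => hunot (h ▸ ha)
        have hbu : b ≠ u := fun h => hunot (h ▸ hb)
        have key : ∀ c d : ℕ, c ≠ u → d ≠ u → G.ends e₀ = (c, d) → e₀ ≠ f ∧ e₀ ≠ g := by
          intro c d hcu hdu hends₀
          constructor
          · intro h; subst h
            rcases hu with h | h <;> rw [hends₀] at h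
            exacts [hcu h, hdu h]
          · intro h; subst h
            rw [hends₀] at hends
            simp only [Prod.mk.injEq] at hends
            exact hcu hends.1
        have hfg₀ : e₀ ≠ f ∧ e₀ ≠ g := by
          rcases hc₀ with ⟨_, h⟩ | ⟨_, h⟩ | ⟨_, h | h⟩
          · exact key a b hau hbu h
          · exact key b a hbu hau h
          · exact key a b hau hbu h
          · exact key b a hbu hau h
        exact ⟨e₀, he₀E, by rw [koff e₀ hfg₀.1 hfg₀.2]; exact hc₀⟩
      have hx : (G.ends g).1 = x ∨ (G.ends g).2 = x := Or.inr (by rw [hends])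
      obtain ⟨O₂, m1, m2, m3, m4⟩ := ih O₂' g x e' k1 k2 k3 hx hchain₂ hnodup' he'E he'g
        (by rw [koff e' he'f he'g]; exact hsrc)
      exact ⟨O₂, m1, m2, m3, by rw [m4, k4]⟩
    · -- g oriented backward: ends g = (x, u), direction x ← u i.e. u → x? (bwd: target .1)
      have hgf : g ≠ f := fun h => by rw [h, hfbi] at ho; simp at ho
      have hq2 : (G.ends g).2 = u := by rw [hends]
      obtain ⟨O₂', k1, k2, k3, k4, koff⟩ :=
        G.move O₁ f g u hO hbi hr hgE hgf hu (Or.inr ⟨ho, hq2⟩)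
      have he'g : e' ≠ g := by
        intro h; subst h
        rcases hsrc with ⟨ho', _⟩ | ⟨_, hs⟩
        · rw [ho'] at ho; simp at ho
        · rw [hq2] at hs; exact hus' hs
      have hchain₂ : List.Chain (G.dirStep O₂') x t := by
        apply myChainTransfer t x hchain'
        intro a b ha hb hst
        obtain ⟨e₀, he₀E, hc₀⟩ := hst
        have hau : a ≠ u := fun h => hunot (h ▸ ha)
        have hbu : b ≠ u := fun h => hunot (h ▸ hb)
        have key : ∀ c d : ℕ, c ≠ u → d ≠ u → G.ends e₀ = (c, d) → e₀ ≠ f ∧ e₀ ≠ g := by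
          intro c d hcu hdu hends₀
          constructor
          · intro h; subst h
            rcases hu with h | h <;> rw [hends₀] at h
            exacts [hcu h, hdu h]
          · intro h; subst h
            rw [hends₀] at hends
            simp only [Prod.mk.injEq] at hends
            exact hdu hends.2
        have hfg₀ : e₀ ≠ f ∧ e₀ ≠ g := by
          rcases hc₀ with ⟨_, h⟩ | ⟨_, h⟩ | ⟨_, h | h⟩
          · exact key a b hau hbu h
          · exact key b a hbu hau h
          · exact key a b hau hbu h
          · exact key b a hbu hau h
        exact ⟨e₀, he₀E, by rw [koff e₀ hfg₀.1 hfg₀.2]; exact hc₀⟩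
      have hx : (G.ends g).1 = x ∨ (G.ends g).2 = x := Or.inl (by rw [hends])
      obtain ⟨O₂, m1, m2, m3, m4⟩ := ih O₂' g x e' k1 k2 k3 hx hchain₂ hnodup' he'E he'g
        (by rw [koff e' he'f he'g]; exact hsrc)
      exact ⟨O₂, m1, m2, m3, by rw [m4, k4]⟩
    · -- g is the bioriented edge, so g = f
      have hgf : g = f := by
        have : g ∈ G.biE O₁ := Finset.mem_filter.mpr ⟨hgE, ho⟩
        rwa [hbi, Finset.mem_singleton] at this
      subst hgf
      have hx : (G.ends g).1 = x ∨ (G.ends g).2 = x := by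
        rcases hends with h | h
        · exact Or.inr (by rw [h])
        · exact Or.inl (by rw [h])
      exact ih O₁ g x e' hO hbi hr hx hchain' hnodup' he'E he'f hsrc

end WGraph

/-- For a non-empty `1`-orientation `O` on a connected graph
`G` with bioriented edge `e`, the following are equivalent: (a) `O` is
`e`-rooted; (b) every vertex is reachable by an `O`-directed path from `e`;
(c) for every edge `e'` there is an equivalent `1`-orientation whose
bioriented edge is `e'`. -/
theorem rooted_iff_reachable_iff_movable (G : WGraph) (hG : G.Connected)
    (O : Orient) (e : ℕ) (hO : G.IsOrientOn ∅ O) (hbi : G.biE O = {e}) :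
    (G.RootedAt ∅ O e ↔ ∀ v ∈ G.V, G.dirReachFromEdge O e v) ∧
    (G.RootedAt ∅ O e ↔ ∀ e' ∈ G.E, ∃ O' : Orient,
        G.biE O' = {e'} ∧ G.equivOr ∅ 1 O O') := by
    classical
  have hemem : e ∈ G.biE O := by rw [hbi]; exact Finset.mem_singleton_self e
  have heE : e ∈ G.E := (Finset.mem_filter.mp hemem).1
  have hebi : O e = some EdgeDir.bi := (Finset.mem_filter.mp hemem).2
  have iff1 : G.RootedAt ∅ O e ↔ ∀ v ∈ G.V, G.dirReachFromEdge O e v :=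
    ⟨fun h => G.reach_of_rooted hO heE h, fun h => G.rooted_of_reach h⟩
  refine ⟨iff1, ?_, ?_⟩
  · -- rooted → movable
    intro hroot e' he'
    by_cases hee : e' = e
    · subst hee; exact ⟨O, hbi, hO, hO, rfl⟩
    · have main : ∀ s', s' ∈ G.V →
          ((O e' = some EdgeDir.fwd ∧ (G.ends e').1 = s') ∨
           (O e' = some EdgeDir.bwd ∧ (G.ends e').2 = s')) →
          ∃ O' : Orient, G.biE O' = {e'} ∧ G.equivOr ∅ 1 O O' := by
        intro s' hs'V hsrc
        obtain ⟨u, hu, hp⟩ := (iff1.mp hroot) s' hs'V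
        obtain ⟨l, hch, hlast, hnd⟩ := myWalk hp
        obtain ⟨O₂, m1, m2, _, m4⟩ := G.lemC l O e u e' hO hbi hroot hu hch hnd he' hee
          (by rw [hlast]; exact hsrc)
        refine ⟨O₂, m2, hO, m1, ?_⟩
        funext v
        simp only [WGraph.divOr, m4]
      rcases ho : O e' with _ | d
      · exact absurd ho ((hO e').mpr (by simp [he']))
      cases d with
      | fwd => exact main (G.ends e').1 (G.ends_mem e' he').1 (Or.inl ⟨ho, rfl⟩)
      | bwd => exact main (G.ends e').2 (G.ends_mem e' he').2 (Or.inr ⟨ho, rfl⟩)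
      | bi =>
        exfalso
        have : e' ∈ G.biE O := Finset.mem_filter.mpr ⟨he', ho⟩
        rw [hbi, Finset.mem_singleton] at this
        exact hee this
  · -- movable → rooted
    intro hmov Z hZsub hZne hind
    by_contra hno
    push_neg at hno
    rw [WGraph.indEdges, Finset.mem_filter] at hind
    have hZn : Z.Nonempty := ⟨_, hind.2.1⟩
    obtain ⟨e', he'cut⟩ := G.cut_nonempty hG hZsub hZn hZne
    have he'cut' := he'cut
    rw [WGraph.cutEdges, Finset.mem_filter, Finset.mem_sdiff] at he'cut'
    have he'E : e' ∈ G.E := he'cut'.1.1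
    obtain ⟨O', hbi', _, hO', hdiv⟩ := hmov e' he'E
    have hee' : e ≠ e' := by
      intro h; subst h
      rcases he'cut'.2 with h | h; exacts [h.2 hind.2.2, h.1 hind.2.1]
    have htOr : ∀ v ∈ G.V, G.tOr O v = G.tOr O' v := by
      intro v hv
      have h := congrFun hdiv v
      have hEne : ¬(G.E \ ∅ = ∅) := by
        rw [Finset.sdiff_empty]
        exact Finset.ne_empty_of_mem heE
      simp only [WGraph.divOr, if_pos hv, if_neg hEne] at h
      omega
    have hswap : ∀ Oo : Orient, ∑ v ∈ Z, G.tOr Oo v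
        = ∑ e₀ ∈ G.E, ∑ v ∈ Z, dirT (Oo e₀) (G.ends e₀) v := by
      intro Oo
      simp only [WGraph.tOr]
      exact Finset.sum_comm
    have heq : ∑ e₀ ∈ G.E, ∑ v ∈ Z, dirT (O' e₀) (G.ends e₀) v
        = ∑ e₀ ∈ G.E, ∑ v ∈ Z, dirT (O e₀) (G.ends e₀) v := by
      rw [← hswap O, ← hswap O']
      exact Finset.sum_congr rfl fun v hv => (htOr v (hZsub hv)).symm
    have hO'le : ∀ e₀ ∈ G.E, ∑ v ∈ Z, dirT (O' e₀) (G.ends e₀) v ≤ 1 := by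
      intro e₀ _
      rcases ho' : O' e₀ with _ | d
      · rw [sum_dirT_none]; omega
      cases d with
      | fwd => rw [sum_dirT_fwd]; split <;> omega
      | bwd => rw [sum_dirT_bwd]; split <;> omega
      | bi =>
        have : e₀ = e' := by
          have : e₀ ∈ G.biE O' := Finset.mem_filter.mpr ⟨‹e₀ ∈ G.E›, ho'⟩
          rwa [hbi', Finset.mem_singleton] at this
        subst this
        rw [sum_dirT_bi]
        rcases he'cut'.2 with h | h
        · rw [if_pos h.1, if_neg h.2]
        · rw [if_neg h.1, if_pos h.2]
    have hOge : ∀ e₀ ∈ G.E, ((G.ends e₀).1 ∈ Z ∨ (G.ends e₀).2 ∈ Z) →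
        1 ≤ ∑ v ∈ Z, dirT (O e₀) (G.ends e₀) v := by
      intro e₀ he₀E hab
      have hcutmem : ((G.ends e₀).1 ∈ Z ∧ (G.ends e₀).2 ∉ Z) ∨
          ((G.ends e₀).1 ∉ Z ∧ (G.ends e₀).2 ∈ Z) → e₀ ∈ G.cutEdges ∅ Z := by
        intro h
        rw [WGraph.cutEdges, Finset.mem_filter]
        exact ⟨by simp [he₀E], h⟩
      rcases ho : O e₀ with _ | d
      · exact absurd ho ((hO e₀).mpr (by simp [he₀E]))
      cases d with
      | fwd =>
        by_cases hb : (G.ends e₀).2 ∈ Z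
        · rw [sum_dirT_fwd, if_pos hb]
        · exfalso
          have ha : (G.ends e₀).1 ∈ Z := hab.resolve_right hb
          have hcut := hcutmem (Or.inl ⟨ha, hb⟩)
          have := hno e₀ hcut (G.ends e₀).2
            (Finset.mem_sdiff.mpr ⟨(G.ends_mem e₀ he₀E).2, hb⟩)
          rw [ho] at this
          simp [dirT] at this
      | bwd =>
        by_cases ha : (G.ends e₀).1 ∈ Z
        · rw [sum_dirT_bwd, if_pos ha]
        · exfalso
          have hb : (G.ends e₀).2 ∈ Z := hab.resolve_left ha
          have hcut := hcutmem (Or.inr ⟨ha, hb⟩)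
          have := hno e₀ hcut (G.ends e₀).1
            (Finset.mem_sdiff.mpr ⟨(G.ends_mem e₀ he₀E).1, ha⟩)
          rw [ho] at this
          simp [dirT] at this
      | bi =>
        rw [sum_dirT_bi]
        rcases hab with h | h
        · rw [if_pos h]; omega
        · rw [if_pos h]; omega
    have hlt : ∑ e₀ ∈ G.E, ∑ v ∈ Z, dirT (O' e₀) (G.ends e₀) v
        < ∑ e₀ ∈ G.E, ∑ v ∈ Z, dirT (O e₀) (G.ends e₀) v := by
      apply Finset.sum_lt_sum
      · intro e₀ he₀E
        by_cases hab : (G.ends e₀).1 ∈ Z ∨ (G.ends e₀).2 ∈ Z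
        · exact le_trans (hO'le e₀ he₀E) (hOge e₀ he₀E hab)
        · push_neg at hab
          have hz : ∑ v ∈ Z, dirT (O' e₀) (G.ends e₀) v = 0 := by
            rcases ho' : O' e₀ with _ | d
            · rw [sum_dirT_none]
            cases d with
            | fwd => rw [sum_dirT_fwd, if_neg hab.2]
            | bwd => rw [sum_dirT_bwd, if_neg hab.1]
            | bi => rw [sum_dirT_bi, if_neg hab.1, if_neg hab.2]
          rw [hz]
          exact Nat.zero_le _
      · refine ⟨e, heE, ?_⟩
        have h2 : ∑ v ∈ Z, dirT (O e) (G.ends e) v = 2 := by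
          rw [hebi, sum_dirT_bi, if_pos hind.2.1, if_pos hind.2.2]
        have h1 : ∑ v ∈ Z, dirT (O' e) (G.ends e) v ≤ 1 := hO'le e heE
        omega
    omega
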